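/- Let T be a continuous linear operator on a separable Fréchet space F. Then T satisfies the Hypercyclicity Criterion if and only if the direct sum operator T ⊕ T, acting on F × F by (f,g) ↦ (Tf, Tg), is hypercyclic on F × F (with the product topology). -/

import Mathlib

open Filter Topology

/-- A continuous linear operator `T` is hypercyclic if some vector has dense orbit. -/
def Hypercyclic {𝕜 X : Type*} [Semiring 𝕜] [TopologicalSpace X] [AddCommMonoid X]
    [Module 𝕜 X] (T : X →L[𝕜] X) : Prop :=
  ∃ x : X, Dense (Set.range fun n : ℕ => (T ^ n) x)

/-- `T` satisfies the Hypercyclicity Criterion: there are a strictly increasing sequence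
of positive integers `n k` and dense sets `X₀`, `Y₀` such that `T ^ (n k) f → 0` for all
`f ∈ X₀`, and for every `g ∈ Y₀` there is a sequence `u k → 0` with `T ^ (n k) (u k) → g`. -/
def SatisfiesHypercyclicityCriterion {𝕜 F : Type*} [Semiring 𝕜] [TopologicalSpace F]
    [AddCommMonoid F] [Module 𝕜 F] (T : F →L[𝕜] F) : Prop :=
  ∃ n : ℕ → ℕ, StrictMono n ∧ (∀ k, 0 < n k) ∧
    ∃ X₀ Y₀ : Set F, Dense X₀ ∧ Dense Y₀ ∧
      (∀ f ∈ X₀, Tendsto (fun k => (T ^ n k) f) atTop (nhds 0)) ∧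
      (∀ g ∈ Y₀, ∃ u : ℕ → F, Tendsto u atTop (nhds 0) ∧
        Tendsto (fun k => (T ^ n k) (u k)) atTop (nhds g))

open Set Uniformity

private lemma clm_pow_apply {𝕜 X : Type*} [Semiring 𝕜] [TopologicalSpace X] [AddCommMonoid X]
    [Module 𝕜 X] (M : X →L[𝕜] X) (n : ℕ) (v : X) : (M ^ n) v = M^[n] v := by
  induction n generalizing v with
  | zero => simp
  | succ n ih => rw [pow_succ, ContinuousLinearMap.mul_apply, ih, ← Function.iterate_succ_apply]

private lemma prodMap_pow_apply {𝕜 F : Type*} [Semiring 𝕜] [TopologicalSpace F] [AddCommMonoid F]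
    [Module 𝕜 F] (T : F →L[𝕜] F) (n : ℕ) (p : F × F) :
    ((T.prodMap T) ^ n) p = ((T ^ n) p.1, (T ^ n) p.2) := by
  induction n generalizing p with
  | zero => simp
  | succ n ih => simp [pow_succ, ContinuousLinearMap.mul_apply, ih]

private lemma birkhoff {X : Type*} [TopologicalSpace X] [SecondCountableTopology X]
    [BaireSpace X] [Nonempty X] {S : X → X} (hS : Continuous S)
    (h : ∀ U V : Set X, IsOpen U → U.Nonempty → IsOpen V → V.Nonempty →
      ∃ (m : ℕ) (p : X), p ∈ U ∧ S^[m] p ∈ V) :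
    ∃ x : X, Dense (Set.range fun m : ℕ => S^[m] x) := by
  set B := {V ∈ TopologicalSpace.countableBasis X | V.Nonempty} with hBdef
  have hB := TopologicalSpace.isBasis_countableBasis X
  have hdense : Dense (⋂ V ∈ B, ⋃ m : ℕ, S^[m] ⁻¹' V) := by
    refine dense_biInter_of_isOpen (fun V hV => ?_)
      ((TopologicalSpace.countable_countableBasis X).mono (sep_subset _ _))
      (fun V hV => ?_)
    · exact isOpen_iUnion fun m => (hB.isOpen hV.1).preimage (hS.iterate m)
    · rw [dense_iff_inter_open]
      intro U hU hUne
      obtain ⟨m, p, hpU, hpV⟩ := h U V hU hUne (hB.isOpen hV.1) hV.2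
      exact ⟨p, hpU, mem_iUnion.2 ⟨m, hpV⟩⟩
  obtain ⟨x, hx⟩ := hdense.nonempty
  refine ⟨x, dense_iff_inter_open.2 fun U hU hUne => ?_⟩
  obtain ⟨p, hpU⟩ := hUne
  obtain ⟨V, hVB, hpV, hVU⟩ := hB.exists_subset_of_mem_open hpU hU
  have := mem_iInter₂.1 hx V ⟨hVB, ⟨p, hpV⟩⟩
  obtain ⟨m, hm⟩ := mem_iUnion.1 this
  exact ⟨S^[m] x, hVU hm, mem_range_self m⟩


private lemma exists_gt_mem' {X : Type*} [TopologicalSpace X] [T1Space X]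
    [∀ p : X, NeBot (𝓝[≠] p)] {f : ℕ → X} (hf : Dense (Set.range f))
    {O : Set X} (hO : IsOpen O) (hOne : O.Nonempty) (m : ℕ) : ∃ n > m, f n ∈ O := by
  have h2 : Dense (Set.range f \ f '' {i | i ≤ m}) :=
    hf.diff_finite ((Set.finite_le_nat m).image f)
  obtain ⟨p, ⟨⟨n, rfl⟩, hp2⟩, hpO⟩ := h2.exists_mem_open hO hOne
  rcases le_or_gt n m with h' | h'
  · exact absurd ⟨n, h', rfl⟩ hp2
  · exact ⟨n, h', hpO⟩


/-- Bès–Peris theorem: on a separable Fréchet space, `T` satisfies the Hypercyclicity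
Criterion iff `T ⊕ T` is hypercyclic on `F × F`. -/
theorem satisfiesHypercyclicityCriterion_iff_prodMap_hypercyclic {𝕜 F : Type*} [RCLike 𝕜]
    [AddCommGroup F] [Module 𝕜 F] [Module ℝ F] [IsScalarTower ℝ 𝕜 F]
    [UniformSpace F] [IsUniformAddGroup F] [ContinuousSMul 𝕜 F]
    [LocallyConvexSpace ℝ F] [TopologicalSpace.MetrizableSpace F] [CompleteSpace F]
    [TopologicalSpace.SeparableSpace F] (T : F →L[𝕜] F) :
    SatisfiesHypercyclicityCriterion T ↔ Hypercyclic (T.prodMap T) := by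
  unfold SatisfiesHypercyclicityCriterion Hypercyclic
  constructor
  · intro hcrit
    obtain ⟨n, hn, hnpos, X₀, Y₀, hX₀, hY₀, hzero, happx⟩ := hcrit
    haveI : (uniformity F).IsCountablyGenerated := by
      rw [uniformity_eq_comap_nhds_zero F]
      exact Filter.comap.isCountablyGenerated _ _
    haveI : SecondCountableTopology F := UniformSpace.secondCountable_of_separable F
    haveI : Nonempty (F × F) := ⟨(0, 0)⟩
    have key : ∀ U V : Set (F × F), IsOpen U → U.Nonempty → IsOpen V → V.Nonempty →
        ∃ (m : ℕ) (p : F × F), p ∈ U ∧ (T.prodMap T)^[m] p ∈ V := by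
      intro U V hU hUne hV hVne
      obtain ⟨f, hfX, hfU⟩ := (hX₀.prod hX₀).exists_mem_open hU hUne
      obtain ⟨g, hgY, hgV⟩ := (hY₀.prod hY₀).exists_mem_open hV hVne
      obtain ⟨u₁, hu₁0, hu₁⟩ := happx g.1 hgY.1
      obtain ⟨u₂, hu₂0, hu₂⟩ := happx g.2 hgY.2
      have h1 : Tendsto (fun k => ((f.1 + u₁ k, f.2 + u₂ k) : F × F)) atTop (𝓝 f) := by
        have a1 : Tendsto (fun k => f.1 + u₁ k) atTop (𝓝 (f.1 + 0)) :=
          tendsto_const_nhds.add hu₁0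
        have a2 : Tendsto (fun k => f.2 + u₂ k) atTop (𝓝 (f.2 + 0)) :=
          tendsto_const_nhds.add hu₂0
        rw [add_zero] at a1 a2
        simpa using a1.prodMk_nhds a2
      have h2 : Tendsto (fun k => (((T ^ n k) (f.1 + u₁ k), (T ^ n k) (f.2 + u₂ k)) : F × F))
          atTop (𝓝 g) := by
        have t1 : Tendsto (fun k => (T ^ n k) (f.1 + u₁ k)) atTop (𝓝 g.1) := by
          have h := (hzero f.1 hfX.1).add hu₁
          rw [zero_add] at h
          simpa [map_add] using h
        have t2 : Tendsto (fun k => (T ^ n k) (f.2 + u₂ k)) atTop (𝓝 g.2) := by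
          have h := (hzero f.2 hfX.2).add hu₂
          rw [zero_add] at h
          simpa [map_add] using h
        simpa using t1.prodMk_nhds t2
      obtain ⟨k, hk1, hk2⟩ :=
        ((h1.eventually (hU.mem_nhds hfU)).and (h2.eventually (hV.mem_nhds hgV))).exists
      refine ⟨n k, (f.1 + u₁ k, f.2 + u₂ k), hk1, ?_⟩
      rw [← clm_pow_apply, prodMap_pow_apply]
      exact hk2
    obtain ⟨x, hx⟩ := birkhoff (T.prodMap T).continuous key
    refine ⟨x, ?_⟩
    have : (fun m : ℕ => ((T.prodMap T) ^ m) x) = fun m : ℕ => (T.prodMap T)^[m] x :=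
      funext fun m => clm_pow_apply _ m x
    rw [this]; exact hx
  · intro hhc
    obtain ⟨w, hw⟩ := hhc
    by_cases hFS : Subsingleton F
    · refine ⟨fun k => k + 1, fun a b h => Nat.add_lt_add_right h 1, fun k => k.succ_pos,
        Set.univ, Set.univ, dense_univ, dense_univ, ?_, ?_⟩
      · intro f _
        have : (fun k => (T ^ (k + 1)) f) = fun _ => (0 : F) :=
          funext fun _ => Subsingleton.elim _ _
        rw [this]; exact tendsto_const_nhds
      · intro g _
        refine ⟨fun _ => 0, tendsto_const_nhds, ?_⟩
        have : (fun k => (T ^ (k + 1)) (0 : F)) = fun _ => g :=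
          funext fun _ => Subsingleton.elim _ _
        rw [this]; exact tendsto_const_nhds
    haveI : Nontrivial F := not_subsingleton_iff_nontrivial.mp hFS
    set x := w.1 with hx
    set y := w.2 with hy
    -- the orbit of the pair
    have horb : Dense (Set.range fun n : ℕ => (((T ^ n) x, (T ^ n) y) : F × F)) := by
      have : (fun n : ℕ => ((T.prodMap T) ^ n) w)
          = fun n : ℕ => (((T ^ n) x, (T ^ n) y) : F × F) :=
        funext fun n => prodMap_pow_apply T n w
      rwa [this] at hw
    -- no isolated points
    obtain ⟨v, hv⟩ := exists_ne (0 : F)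
    haveI hNB : ∀ p : F × F, NeBot (𝓝[≠] p) := by
      intro p
      have h0r : Tendsto (fun k : ℕ => (((k : ℝ) + 1)⁻¹ : ℝ)) atTop (𝓝 (0 : ℝ)) := by
        simpa [one_div] using tendsto_one_div_add_atTop_nhds_zero_nat (𝕜 := ℝ)
      have hc : Tendsto (fun k : ℕ => ((((k : ℝ) + 1)⁻¹ : ℝ) : 𝕜)) atTop (𝓝 0) := by
        have h2 := ((RCLike.continuous_ofReal (K := 𝕜)).tendsto (0 : ℝ)).comp h0r
        rw [RCLike.ofReal_zero] at h2
        exact h2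
      have hseq : Tendsto (fun k : ℕ => ((p.1 + ((((k : ℝ) + 1)⁻¹ : ℝ) : 𝕜) • v, p.2) : F × F))
          atTop (𝓝 p) := by
        have a1 : Tendsto (fun k : ℕ => p.1 + ((((k : ℝ) + 1)⁻¹ : ℝ) : 𝕜) • v) atTop
            (𝓝 (p.1 + (0 : 𝕜) • v)) :=
          tendsto_const_nhds.add (hc.smul tendsto_const_nhds)
        rw [zero_smul, add_zero] at a1
        simpa using a1.prodMk_nhds (tendsto_const_nhds (x := p.2))
      have hne : ∀ k : ℕ, ((p.1 + ((((k : ℝ) + 1)⁻¹ : ℝ) : 𝕜) • v, p.2) : F × F) ≠ p := by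
        intro k h
        have h1 : p.1 + ((((k : ℝ) + 1)⁻¹ : ℝ) : 𝕜) • v = p.1 := congrArg Prod.fst h
        have h2 : ((((k : ℝ) + 1)⁻¹ : ℝ) : 𝕜) • v = 0 := add_eq_left.mp h1
        rcases smul_eq_zero.mp h2 with hcz | hvz
        · rw [RCLike.ofReal_eq_zero] at hcz
          have : (((k : ℝ) + 1)⁻¹ : ℝ) ≠ 0 := by positivity
          exact this hcz
        · exact hv hvz
      have ht : Tendsto (fun k : ℕ => ((p.1 + ((((k : ℝ) + 1)⁻¹ : ℝ) : 𝕜) • v, p.2) : F × F))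
          atTop (𝓝[≠] p) :=
        tendsto_nhdsWithin_of_tendsto_nhds_of_eventually_within _ hseq
          (Eventually.of_forall fun k => hne k)
      exact ht.neBot
    -- x is hypercyclic for T
    have hxdense : Dense (Set.range fun j : ℕ => (T ^ j) x) := by
      rw [dense_iff_inter_open]
      intro U hU hUne
      obtain ⟨q, hqU⟩ := hUne
      obtain ⟨p, ⟨j, hj⟩, hpO⟩ := horb.exists_mem_open (hU.prod isOpen_univ)
        ⟨(q, (T ^ 0) y), hqU, trivial⟩
      refine ⟨(T ^ j) x, ?_, ⟨j, rfl⟩⟩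
      have hmem1 : p.1 ∈ U := hpO.1
      have hj1 : (T ^ j) x = p.1 := congrArg Prod.fst hj
      exact hj1 ▸ hmem1
    -- antitone basis of 𝓝 0
    obtain ⟨b, hb⟩ := (𝓝 (0 : F)).exists_antitone_basis
    -- key claim
    have claim : ∀ k m : ℕ, ∃ (p : ℕ) (z : F), m < p ∧ (T ^ p) x ∈ b k ∧ z ∈ b k ∧
        (T ^ p) z - x ∈ b k := by
      intro k m
      have hbk : b k ∈ 𝓝 (0 : F) := hb.toHasBasis.mem_of_mem trivial
      -- choose V₁ with (V₁ - V₁) ⊆ b k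
      have hpre : (fun q : F × F => q.1 - q.2) ⁻¹' b k ∈ 𝓝 ((0 : F), (0 : F)) := by
        apply (continuous_fst.sub continuous_snd).continuousAt.preimage_mem_nhds
        simpa using hbk
      rw [nhds_prod_eq] at hpre
      obtain ⟨s, hs, t, ht, hst⟩ := Filter.mem_prod_iff.1 hpre
      set V₁ := s ∩ t ∩ b k with hV₁def
      have hV₁ : V₁ ∈ 𝓝 (0 : F) := Filter.inter_mem (Filter.inter_mem hs ht) hbk
      have hV₁sub : ∀ a ∈ V₁, ∀ c ∈ V₁, a - c ∈ b k := fun a ha c hc =>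
        hst (Set.mk_mem_prod ha.1.1 hc.1.2)
      -- choose j with y - (T ^ j) x ∈ V₁
      have hyV : {z : F | y - z ∈ V₁} ∈ 𝓝 y := by
        have : ContinuousAt (fun z : F => y - z) y := (continuous_const.sub continuous_id).continuousAt
        have := this.preimage_mem_nhds (by simpa using hV₁)
        exact this
      obtain ⟨_, hmem, j, rfl⟩ := mem_closure_iff_nhds.1 (hxdense y) _ hyV
      set z := y - (T ^ j) x with hzdef
      have hzV₁ : z ∈ V₁ := hmem
      -- V₂ := (T^j) ⁻¹' V₁
      have hV₂ : (T ^ j) ⁻¹' V₁ ∈ 𝓝 (0 : F) := by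
        apply (T ^ j).continuous.continuousAt.preimage_mem_nhds
        simpa using hV₁
      -- target open set
      set O := interior ((T ^ j) ⁻¹' V₁ ∩ b k) ×ˢ interior {u : F | u - x ∈ V₁} with hOdef
      have hO : IsOpen O := isOpen_interior.prod isOpen_interior
      have hOne : O.Nonempty := by
        refine ⟨(0, x), ?_, ?_⟩
        · rw [mem_interior_iff_mem_nhds]
          exact Filter.inter_mem hV₂ hbk
        · rw [mem_interior_iff_mem_nhds]
          have : ContinuousAt (fun u : F => u - x) x := (continuous_id.sub continuous_const).continuousAt
          have := this.preimage_mem_nhds (by simpa using hV₁)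
          exact this
      obtain ⟨p, hpm, hpO⟩ := exists_gt_mem' horb hO hOne m
      have hp1 : (T ^ p) x ∈ (T ^ j) ⁻¹' V₁ ∩ b k := interior_subset hpO.1
      have hp2' := interior_subset hpO.2
      have hp2 : (T ^ p) y - x ∈ V₁ := hp2'
      refine ⟨p, z, hpm, hp1.2, hzV₁.2, ?_⟩
      · -- (T^p) z - x ∈ b k
        have hcomm : (T ^ p) ((T ^ j) x) = (T ^ j) ((T ^ p) x) := by
          rw [← ContinuousLinearMap.mul_apply, ← ContinuousLinearMap.mul_apply, pow_mul_comm]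
        have : (T ^ p) z - x = ((T ^ p) y - x) - (T ^ j) ((T ^ p) x) := by
          rw [hzdef, map_sub, hcomm]; abel
        rw [this]
        exact hV₁sub _ hp2 _ hp1.1
    choose N Z h1 h2 h3 h4 using claim
    -- build the sequence
    set n : ℕ → ℕ := fun k => Nat.rec (N 0 0) (fun k ih => N (k + 1) ih) k with hndef
    have hn0 : n 0 = N 0 0 := rfl
    have hnsucc : ∀ k, n (k + 1) = N (k + 1) (n k) := fun k => rfl
    have hmono : StrictMono n := strictMono_nat_of_lt_succ fun k => by
      rw [hnsucc]; exact h1 (k + 1) (n k)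
    have hnpos : ∀ k, 0 < n k := by
      intro k
      have : 0 < n 0 := hn0 ▸ h1 0 0
      exact lt_of_lt_of_le this (hmono.monotone (Nat.zero_le k))
    set zs : ℕ → F := fun k => Nat.rec (Z 0 0) (fun k _ => Z (k + 1) (n k)) k with hzsdef
    have hTx : ∀ k, (T ^ n k) x ∈ b k := by
      intro k; cases k with
      | zero => exact h2 0 0
      | succ k => exact h2 (k + 1) (n k)
    have hzmem : ∀ k, zs k ∈ b k := by
      intro k; cases k with
      | zero => exact h3 0 0
      | succ k => exact h3 (k + 1) (n k)
    have hTz : ∀ k, (T ^ n k) (zs k) - x ∈ b k := by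
      intro k; cases k with
      | zero => exact h4 0 0
      | succ k => exact h4 (k + 1) (n k)
    have hTxlim : Tendsto (fun k => (T ^ n k) x) atTop (𝓝 0) := hb.tendsto hTx
    have hzlim : Tendsto zs atTop (𝓝 0) := hb.tendsto hzmem
    have hTzlim : Tendsto (fun k => (T ^ n k) (zs k)) atTop (𝓝 x) := by
      rw [← tendsto_sub_nhds_zero_iff]
      exact hb.tendsto hTz
    refine ⟨n, hmono, hnpos, Set.range fun j : ℕ => (T ^ j) x,
      Set.range fun j : ℕ => (T ^ j) x, hxdense, hxdense, ?_, ?_⟩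
    · rintro f ⟨j, rfl⟩
      have hcont := ((T ^ j).continuous.tendsto (0 : F)).comp hTxlim
      rw [map_zero] at hcont
      have : (fun k => (T ^ n k) ((T ^ j) x)) = (fun k => (T ^ j) ((T ^ n k) x)) := by
        funext k
        rw [← ContinuousLinearMap.mul_apply, ← ContinuousLinearMap.mul_apply, pow_mul_comm]
      rw [this]; exact hcont
    · rintro g ⟨j, rfl⟩
      refine ⟨fun k => (T ^ j) (zs k), ?_, ?_⟩
      · have hcont := ((T ^ j).continuous.tendsto (0 : F)).comp hzlim
        rw [map_zero] at hcont
        exact hcont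
      · have hcont := ((T ^ j).continuous.tendsto x).comp hTzlim
        have : (fun k => (T ^ n k) ((T ^ j) (zs k))) = (fun k => (T ^ j) ((T ^ n k) (zs k))) := by
          funext k
          rw [← ContinuousLinearMap.mul_apply, ← ContinuousLinearMap.mul_apply, pow_mul_comm]
        rw [this]; exact hcont
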